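/- Let s ∈ ℝ and ε₁, ε₂ ∈ {−1, 1}. Set a = i, b = j, f = ε₁·i, h = ε₂·j, p = 1, q = exp((s·ε₁·ε₂)·j) = cos(s ε₁ ε₂) + sin(s ε₁ ε₂)·j. Then: (1) im(b*h) = 0, so p = exp(s·im(b*h)); (2) im(f*a⁻¹*h) = (ε₁ε₂)·j, so q = exp(s·im(f*a⁻¹*h)); (3) re(p*q*star(h)*a) = 0; (4) re(p*q*star(h)*a*star(h)) = 0; (5) re(q⁻¹*p⁻¹*h*p*q*star(h)*a) = 0; (6) re(h*star(a)) = 0. (Proposition 7.2 of the paper: the four points [π/2, 0, 0, 0], [π/2, 0, 0, π], [π/2, π, 0, 0], [π/2, π, 0, π] satisfy the earring equations G = 0 and the bypass equations G' = 0, hence lie in N_s and N'_s for every s.) -/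

import Mathlib

open Quaternion

/-- The imaginary unit `i` of the quaternions. -/
noncomputable def qi : ℍ[ℝ] := ⟨0, 1, 0, 0⟩
/-- The imaginary unit `j` of the quaternions. -/
noncomputable def qj : ℍ[ℝ] := ⟨0, 0, 1, 0⟩

@[simp] lemma qi_re : qi.re = 0 := rfl
@[simp] lemma qi_imI : qi.imI = 1 := rfl
@[simp] lemma qi_imJ : qi.imJ = 0 := rfl
@[simp] lemma qi_imK : qi.imK = 0 := rfl
@[simp] lemma qj_re : qj.re = 0 := rfl
@[simp] lemma qj_imI : qj.imI = 0 := rfl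
@[simp] lemma qj_imJ : qj.imJ = 1 := rfl
@[simp] lemma qj_imK : qj.imK = 0 := rfl

/-- Proposition 7.2 of the paper: the four points `[π/2, 0, 0, 0]`, `[π/2, 0, 0, π]`,
`[π/2, π, 0, 0]`, `[π/2, π, 0, π]` satisfy both the earring equations `G = 0` and the bypass
equations `G' = 0` (together with the perturbation conditions), hence lie in `N_s` and `N'_s`
for every `s`. -/
theorem four_points_in_NAT (s ε₁ ε₂ : ℝ)
    (hε₁ : ε₁ = 1 ∨ ε₁ = -1) (hε₂ : ε₂ = 1 ∨ ε₂ = -1)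
    (a b f h p q : ℍ[ℝ])
    (ha : a = qi) (hb : b = qj) (hf : f = ε₁ • qi) (hh : h = ε₂ • qj)
    (hp : p = 1)
    (hq : q = (Real.cos (s * ε₁ * ε₂) : ℍ[ℝ]) + Real.sin (s * ε₁ * ε₂) • qj) :
    Quaternion.im (b * h) = 0 ∧ p = NormedSpace.exp (s • Quaternion.im (b * h)) ∧
    Quaternion.im (f * a⁻¹ * h) = (ε₁ * ε₂) • qj ∧
      q = NormedSpace.exp (s • Quaternion.im (f * a⁻¹ * h)) ∧
    (p * q * star h * a).re = 0 ∧
    (p * q * star h * a * star h).re = 0 ∧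
    (q⁻¹ * p⁻¹ * h * p * q * star h * a).re = 0 ∧
    (h * star a).re = 0 := by
  have e1 : ε₁ * ε₁ = 1 := by rcases hε₁ with h' | h' <;> rw [h'] <;> norm_num
  have e2 : ε₂ * ε₂ = 1 := by rcases hε₂ with h' | h' <;> rw [h'] <;> norm_num
  subst ha hb hf hh hp hq
  set t := s * ε₁ * ε₂ with ht
  have pyth : Real.sin t ^ 2 + Real.cos t ^ 2 = 1 := Real.sin_sq_add_cos_sq t
  have him : Quaternion.im (qj * (ε₂ • qj)) = 0 := by
    ext <;> simp
  have him2 : Quaternion.im ((ε₁ • qi) * qi⁻¹ * (ε₂ • qj)) = (ε₁ * ε₂) • qj := by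
    have : qi⁻¹ = (normSq qi)⁻¹ • star qi := Quaternion.inv_def qi
    rw [this]
    ext <;> simp [Quaternion.normSq_def'] <;> ring
  have hnj : ‖qj‖ = 1 := by
    have h1 := Quaternion.normSq_eq_norm_mul_self qj
    have h2 : normSq qj = 1 := by simp [Quaternion.normSq_def']
    nlinarith [norm_nonneg qj]
  refine ⟨him, ?_, him2, ?_, ?_, ?_, ?_, ?_⟩
  · rw [him]; simp
  · rw [him2, smul_smul, ← mul_assoc, ← ht]
    rw [Quaternion.exp_of_re_eq_zero _ (by simp)]
    have hn : ‖t • qj‖ = |t| := by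
      rw [norm_smul, hnj, Real.norm_eq_abs, mul_one]
    rw [hn, Real.cos_abs, smul_smul]
    congr 1
    have : Real.sin |t| / |t| * t = Real.sin t := by
      rcases eq_or_ne t 0 with htz | htne
      · rw [htz]; simp
      · rcases abs_cases t with ⟨h1, _⟩ | ⟨h1, _⟩ <;> rw [h1]
        · field_simp
        · rw [Real.sin_neg]; field_simp
    rw [this]
  · simp [Quaternion.re_mul]
  · simp [Quaternion.re_mul]
  · have hinv : (((Real.cos t : ℍ[ℝ]) + Real.sin t • qj))⁻¹ =
        (normSq ((Real.cos t : ℍ[ℝ]) + Real.sin t • qj))⁻¹ •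
          star ((Real.cos t : ℍ[ℝ]) + Real.sin t • qj) := Quaternion.inv_def _
    rw [hinv]
    simp [Quaternion.re_mul, Quaternion.normSq_def']
  · simp [Quaternion.re_mul]
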